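/- Let 𝕜 be a commutative ring, k ≥ 1, and R = 𝕜[x_1,…,x_k]/(x_1x_2⋯x_k). Let I, J ⊆ {1,…,k} be disjoint nonempty subsets, and consider the short exact sequence 0 → R/(x_J) → R/(x_{I∪J}) → R/(x_I) → 0, where the first map is multiplication by x_I and the second is the canonical projection. Then applying Hom_R(−, R) yields a short exact sequence 0 → Hom_R(R/(x_I), R) → Hom_R(R/(x_{I∪J}), R) → Hom_R(R/(x_J), R) → 0 of R-modules; in particular the map Hom_R(R/(x_{I∪J}), R) → Hom_R(R/(x_J), R), given by precomposition with multiplication by x_I, is surjective. -/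

import Mathlib

open MvPolynomial

/-- The ring `R = 𝕜[x₁,…,x_k]/(x₁x₂⋯x_k)`, with variables indexed by `Fin k`. -/
abbrev NodalRing (𝕜 : Type*) [CommRing 𝕜] (k : ℕ) : Type _ :=
  MvPolynomial (Fin k) 𝕜 ⧸
    Ideal.span {∏ i : Fin k, (X i : MvPolynomial (Fin k) 𝕜)}

/-- `x_I`: the image in `R` of the monomial `∏_{i ∈ I} x_i` (with `x_∅ = 1`). -/
noncomputable def xgen (𝕜 : Type*) [CommRing 𝕜] (k : ℕ) (I : Finset (Fin k)) :
    NodalRing 𝕜 k :=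
  Ideal.Quotient.mk _ (∏ i ∈ I, X i)

section Aux
variable {𝕜 : Type*} [CommRing 𝕜] {k : ℕ}

lemma xgen_mul (A B : Finset (Fin k)) (h : Disjoint A B) :
    xgen 𝕜 k A * xgen 𝕜 k B = xgen 𝕜 k (A ∪ B) := by
  simp only [xgen, ← map_mul, ← Finset.prod_union h]

lemma xgen_univ : xgen 𝕜 k Finset.univ = 0 := by
  rw [xgen, Ideal.Quotient.eq_zero_iff_mem]
  exact Ideal.subset_span rfl

lemma ann_sub (J : Finset (Fin k)) (s : NodalRing 𝕜 k) (h : xgen 𝕜 k J * s = 0) :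
    ∃ t : NodalRing 𝕜 k, s = xgen 𝕜 k Jᶜ * t := by
  obtain ⟨p, rfl⟩ := Ideal.Quotient.mk_surjective s
  rw [xgen, ← map_mul, Ideal.Quotient.eq_zero_iff_mem, Ideal.mem_span_singleton] at h
  obtain ⟨q, hq⟩ := h
  have huniv : (∏ i : Fin k, (X i : MvPolynomial (Fin k) 𝕜))
      = (∏ i ∈ J, X i) * ∏ i ∈ Jᶜ, X i := by
    rw [← Finset.prod_union disjoint_compl_right, Finset.union_compl]
  have hp : p = (∏ i ∈ Jᶜ, X i) * q := by
    apply (isRegular_prod_X J (R := 𝕜)).left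
    show (∏ i ∈ J, X i) * p = (∏ i ∈ J, X i) * ((∏ i ∈ Jᶜ, X i) * q)
    rw [hq, huniv, mul_assoc]
  exact ⟨Ideal.Quotient.mk _ q, by rw [hp, xgen, ← map_mul]⟩

end Aux

set_option maxHeartbeats 2000000 in
/-- **Dualizing the sequence `0 → R/(x_J) → R/(x_{I∪J}) → R/(x_I) → 0` by
`Hom_R(-, R)` again yields a short exact sequence.**
Here `f : R/(x_J) → R/(x_{I∪J})` is multiplication by `x_I` and
`g : R/(x_{I∪J}) → R/(x_I)` is the canonical projection; the claim is that
precomposition with `g` is injective, its range is the kernel of precomposition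
with `f`, and precomposition with `f` (i.e. with multiplication by `x_I`) is
surjective. -/
theorem stmt_16 (𝕜 : Type*) [CommRing 𝕜] (k : ℕ) (hk : 1 ≤ k)
    (I J : Finset (Fin k)) (hdisj : Disjoint I J)
    (hI : I.Nonempty) (hJ : J.Nonempty) :
    ∃ (f : (NodalRing 𝕜 k ⧸ Ideal.span {xgen 𝕜 k J}) →ₗ[NodalRing 𝕜 k]
          (NodalRing 𝕜 k ⧸ Ideal.span {xgen 𝕜 k (I ∪ J)}))
      (g : (NodalRing 𝕜 k ⧸ Ideal.span {xgen 𝕜 k (I ∪ J)}) →ₗ[NodalRing 𝕜 k]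
          (NodalRing 𝕜 k ⧸ Ideal.span {xgen 𝕜 k I}))
      (gstar : ((NodalRing 𝕜 k ⧸ Ideal.span {xgen 𝕜 k I}) →ₗ[NodalRing 𝕜 k]
            NodalRing 𝕜 k) →ₗ[NodalRing 𝕜 k]
          ((NodalRing 𝕜 k ⧸ Ideal.span {xgen 𝕜 k (I ∪ J)}) →ₗ[NodalRing 𝕜 k]
            NodalRing 𝕜 k))
      (fstar : ((NodalRing 𝕜 k ⧸ Ideal.span {xgen 𝕜 k (I ∪ J)}) →ₗ[NodalRing 𝕜 k]
            NodalRing 𝕜 k) →ₗ[NodalRing 𝕜 k]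
          ((NodalRing 𝕜 k ⧸ Ideal.span {xgen 𝕜 k J}) →ₗ[NodalRing 𝕜 k]
            NodalRing 𝕜 k)),
      (∀ s : NodalRing 𝕜 k,
        f (Submodule.Quotient.mk s) = Submodule.Quotient.mk (xgen 𝕜 k I * s)) ∧
      (∀ s : NodalRing 𝕜 k,
        g (Submodule.Quotient.mk s) = Submodule.Quotient.mk s) ∧
      (∀ φ, gstar φ = φ.comp g) ∧
      (∀ φ, fstar φ = φ.comp f) ∧
      Function.Injective gstar ∧
      LinearMap.range gstar = LinearMap.ker fstar ∧
      Function.Surjective fstar := by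
  classical
  set R := NodalRing 𝕜 k with hR
  have hxIJ : xgen 𝕜 k I * xgen 𝕜 k J = xgen 𝕜 k (I ∪ J) := xgen_mul I J hdisj
  have hf0 : Ideal.span {xgen 𝕜 k J} ≤ LinearMap.ker
      ((Ideal.span {xgen 𝕜 k (I ∪ J)}).mkQ.comp
        (LinearMap.toSpanSingleton R R (xgen 𝕜 k I))) := by
    rw [Ideal.span_le]
    rintro _ rfl
    simp only [SetLike.mem_coe, LinearMap.mem_ker, LinearMap.comp_apply,
      LinearMap.toSpanSingleton_apply, Submodule.mkQ_apply, Submodule.Quotient.mk_eq_zero]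
    show xgen 𝕜 k J • xgen 𝕜 k I ∈ _
    rw [smul_eq_mul, mul_comm, hxIJ]
    exact Ideal.subset_span rfl
  have hg0 : Ideal.span {xgen 𝕜 k (I ∪ J)} ≤ LinearMap.ker (Ideal.span {xgen 𝕜 k I}).mkQ := by
    rw [Ideal.span_le]
    rintro _ rfl
    simp only [SetLike.mem_coe, LinearMap.mem_ker, Submodule.mkQ_apply,
      Submodule.Quotient.mk_eq_zero]
    rw [← hxIJ]
    exact Ideal.mem_span_singleton.2 ⟨xgen 𝕜 k J, rfl⟩
  set f : (R ⧸ Ideal.span {xgen 𝕜 k J}) →ₗ[R] (R ⧸ Ideal.span {xgen 𝕜 k (I ∪ J)}) :=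
    Submodule.liftQ _ ((Ideal.span {xgen 𝕜 k (I ∪ J)}).mkQ.comp
      (LinearMap.toSpanSingleton R R (xgen 𝕜 k I))) hf0 with hfdef
  set g : (R ⧸ Ideal.span {xgen 𝕜 k (I ∪ J)}) →ₗ[R] (R ⧸ Ideal.span {xgen 𝕜 k I}) :=
    Submodule.liftQ _ (Ideal.span {xgen 𝕜 k I}).mkQ hg0 with hgdef
  have hfmk : ∀ s : R, f (Submodule.Quotient.mk s)
      = Submodule.Quotient.mk (xgen 𝕜 k I * s) := by
    intro s
    show Submodule.Quotient.mk (s • xgen 𝕜 k I) = _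
    rw [smul_eq_mul, mul_comm]
  have hgmk : ∀ s : R, g (Submodule.Quotient.mk s) = Submodule.Quotient.mk s :=
    fun _ => rfl
  have hmk1 : ∀ (a : Ideal R) (s : R),
      (Submodule.Quotient.mk s : R ⧸ a) = s • (Submodule.Quotient.mk (1:R) : R ⧸ a) := by
    intro a s
    rw [← Submodule.Quotient.mk_smul, smul_eq_mul, mul_one]
  refine ⟨f, g, LinearMap.lcomp R R g, LinearMap.lcomp R R f, hfmk, hgmk,
    fun _ => rfl, fun _ => rfl, ?_, ?_, ?_⟩
  · -- gstar injective
    intro φ₁ φ₂ h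
    apply LinearMap.ext
    intro t
    obtain ⟨s, rfl⟩ := Submodule.Quotient.mk_surjective _ t
    have h' : φ₁ (g (Submodule.Quotient.mk s)) = φ₂ (g (Submodule.Quotient.mk s)) :=
      congrFun (congrArg DFunLike.coe h) (Submodule.Quotient.mk s)
    rwa [hgmk] at h'
  · -- range gstar = ker fstar
    ext φ
    constructor
    · rintro ⟨ψ, rfl⟩
      simp only [LinearMap.mem_ker]
      apply LinearMap.ext
      intro t
      obtain ⟨s, rfl⟩ := Submodule.Quotient.mk_surjective _ t
      show ψ (g (f (Submodule.Quotient.mk s))) = 0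
      rw [hfmk, hgmk]
      have h0 : (Submodule.Quotient.mk (xgen 𝕜 k I * s) :
          R ⧸ Ideal.span {xgen 𝕜 k I}) = 0 := by
        rw [Submodule.Quotient.mk_eq_zero]
        exact Ideal.mem_span_singleton.2 ⟨s, rfl⟩
      rw [h0, map_zero]
    · intro hφ
      rw [LinearMap.mem_ker] at hφ
      have hφ' : ∀ s : R, φ (f (Submodule.Quotient.mk s)) = 0 := by
        intro s
        exact congrFun (congrArg DFunLike.coe hφ) (Submodule.Quotient.mk s)
      have hIc : xgen 𝕜 k I • φ (Submodule.Quotient.mk 1) = 0 := by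
        rw [← map_smul, ← hmk1, ← mul_one (xgen 𝕜 k I), ← hfmk]
        exact hφ' 1
      have hker : Ideal.span {xgen 𝕜 k I} ≤ LinearMap.ker
          (LinearMap.toSpanSingleton R R (φ (Submodule.Quotient.mk 1))) := by
        rw [Ideal.span_le]
        rintro _ rfl
        simp only [SetLike.mem_coe, LinearMap.mem_ker, LinearMap.toSpanSingleton_apply]
        exact hIc
      refine ⟨Submodule.liftQ _ _ hker, ?_⟩
      apply LinearMap.ext
      intro t
      obtain ⟨s, rfl⟩ := Submodule.Quotient.mk_surjective _ t
      show (Submodule.liftQ _ _ hker) (g (Submodule.Quotient.mk s))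
          = φ (Submodule.Quotient.mk s)
      rw [hgmk]
      show s • φ (Submodule.Quotient.mk 1) = φ (Submodule.Quotient.mk s)
      rw [← map_smul, ← hmk1]
  · -- fstar surjective
    intro ψ
    have hann : xgen 𝕜 k J * ψ (Submodule.Quotient.mk 1) = 0 := by
      have h1 : (Submodule.Quotient.mk (xgen 𝕜 k J) : R ⧸ Ideal.span {xgen 𝕜 k J}) = 0 := by
        rw [Submodule.Quotient.mk_eq_zero]
        exact Ideal.subset_span rfl
      calc xgen 𝕜 k J * ψ (Submodule.Quotient.mk 1)
          = ψ (xgen 𝕜 k J • Submodule.Quotient.mk 1) := by rw [map_smul]; rfl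
        _ = ψ (Submodule.Quotient.mk (xgen 𝕜 k J)) := by rw [← hmk1]
        _ = 0 := by rw [h1, map_zero]
    obtain ⟨t, ht⟩ := ann_sub J _ hann
    have hIK : Disjoint I (I ∪ J)ᶜ :=
      Finset.disjoint_left.2 fun i hi hic =>
        (Finset.mem_compl.1 hic) (Finset.mem_union_left _ hi)
    have hJc : Jᶜ = I ∪ (I ∪ J)ᶜ := by
      ext i
      simp only [Finset.mem_compl, Finset.mem_union]
      have hdis : i ∈ I → i ∉ J := fun h => Finset.disjoint_left.mp hdisj h
      tauto
    have hxIr : xgen 𝕜 k I * (xgen 𝕜 k (I ∪ J)ᶜ * t) = ψ (Submodule.Quotient.mk 1) := by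
      rw [← mul_assoc, xgen_mul I ((I ∪ J)ᶜ) hIK, ← hJc, ← ht]
    have hxIJr : xgen 𝕜 k (I ∪ J) * (xgen 𝕜 k (I ∪ J)ᶜ * t) = 0 := by
      rw [← mul_assoc, xgen_mul _ _ disjoint_compl_right, Finset.union_compl,
        xgen_univ, zero_mul]
    have hker : Ideal.span {xgen 𝕜 k (I ∪ J)} ≤ LinearMap.ker
        (LinearMap.toSpanSingleton R R (xgen 𝕜 k (I ∪ J)ᶜ * t)) := by
      rw [Ideal.span_le]
      rintro _ rfl
      simp only [SetLike.mem_coe, LinearMap.mem_ker, LinearMap.toSpanSingleton_apply]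
      show xgen 𝕜 k (I ∪ J) • (xgen 𝕜 k (I ∪ J)ᶜ * t) = 0
      rw [smul_eq_mul]
      exact hxIJr
    refine ⟨Submodule.liftQ _ _ hker, ?_⟩
    apply LinearMap.ext
    intro u
    obtain ⟨s, rfl⟩ := Submodule.Quotient.mk_surjective _ u
    show (Submodule.liftQ _ _ hker) (f (Submodule.Quotient.mk s))
        = ψ (Submodule.Quotient.mk s)
    rw [hfmk]
    show (xgen 𝕜 k I * s) • (xgen 𝕜 k (I ∪ J)ᶜ * t) = ψ (Submodule.Quotient.mk s)
    rw [hmk1 _ s, map_smul, smul_eq_mul, smul_eq_mul, mul_comm (xgen 𝕜 k I) s,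
      mul_assoc, hxIr]
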